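/- Assume QV = ρωV with ρ > 0, |ω| = 1, and hypothesis (rsr). Then the unique continuous solution F of the basic dilation equation is Hölder with exponent log_B(ρ/λ): there is a constant c ≥ 0 such that ‖F(y) − F(x)‖ ≤ c |y − x|^{log_B(ρ/λ)} for all x, y ∈ [0,1]. -/

import Mathlib

open scoped Classical BigOperators
open Filter Asymptotics

attribute [local instance] Matrix.linftyOpNormedAddCommGroup Matrix.linftyOpNormedRing

noncomputable section

/-- `A_w = A_{w_1} ⋯ A_{w_K}` for a word `w` of length `K` over the digit alphabet. -/
def wordProd {B d : ℕ} (A : Fin B → Matrix (Fin d) (Fin d) ℂ) {K : ℕ}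
    (w : Fin K → Fin B) : Matrix (Fin d) (Fin d) ℂ :=
  ((List.ofFn w).map A).prod

/-- `(0.w)_B = Σ_{k=1}^K w_k B^{-k}`. -/
def wordVal {B K : ℕ} (w : Fin K → Fin B) : ℝ :=
  ∑ k : Fin K, (w k : ℝ) / (B : ℝ) ^ ((k : ℕ) + 1)

/-- The running sum `S_K(x) = Σ_{|w|=K, (0.w)_B ≤ x} A_w C`. -/
def runSum {B d : ℕ} (A : Fin B → Matrix (Fin d) (Fin d) ℂ) (C : Fin d → ℂ)
    (K : ℕ) (x : ℝ) : Fin d → ℂ :=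
  ∑ w : Fin K → Fin B, if wordVal w ≤ x then (wordProd A w).mulVec C else 0

/-- The basic dilation equation for data `ρ, ω, V`. -/
def DilationEq {B d : ℕ} (A : Fin B → Matrix (Fin d) (Fin d) ℂ) (ρ : ℝ) (ω : ℂ)
    (V : Fin d → ℂ) (Φ : ℝ → Fin d → ℂ) : Prop :=
  Φ 0 = 0 ∧ Φ 1 = V ∧
    ∀ r : Fin B, ∀ x : ℝ, (r : ℝ) / B ≤ x → x < ((r : ℝ) + 1) / B →
      Φ x = ((ρ : ℂ) * ω)⁻¹ •
        ((∑ s ∈ Finset.univ.filter fun s : Fin B => s < r, (A s).mulVec V) +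
          (A r).mulVec (Φ (B * x - r)))

namespace DilationAux

/-- clamp to [0,1] -/
def clamp (x : ℝ) : ℝ := max 0 (min 1 x)

lemma clamp_mem (x : ℝ) : clamp x ∈ Set.Icc (0:ℝ) 1 :=
  ⟨le_max_left _ _, max_le (by norm_num) (min_le_left _ _)⟩

lemma clamp_of_nonpos {x : ℝ} (h : x ≤ 0) : clamp x = 0 :=
  max_eq_left (le_trans (min_le_right _ _) h)

lemma clamp_of_one_le {x : ℝ} (h : 1 ≤ x) : clamp x = 1 := by
  rw [clamp, min_eq_left h]; exact max_eq_right (by norm_num)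

lemma clamp_of_mem {x : ℝ} (h0 : 0 ≤ x) (h1 : x ≤ 1) : clamp x = x := by
  rw [clamp, min_eq_right h1]; exact max_eq_right h0

lemma continuous_clamp : Continuous clamp :=
  continuous_const.max (continuous_const.min continuous_id)

lemma sum_mulVec {B d : ℕ} (A : Fin B → Matrix (Fin d) (Fin d) ℂ) (V : Fin d → ℂ) :
    (∑ r, A r).mulVec V = ∑ r, (A r).mulVec V := by
  ext i
  simp only [Matrix.mulVec, dotProduct, Matrix.sum_apply, Finset.sum_apply, Finset.sum_mul]
  rw [Finset.sum_comm]


section Tmap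

variable {B d : ℕ} (A : Fin B → Matrix (Fin d) (Fin d) ℂ) (ρ : ℝ) (ω : ℂ) (V : Fin d → ℂ)

/-- The transfer operator written in a globally continuous form. -/
def Tmap (f : ℝ → Fin d → ℂ) (x : ℝ) : Fin d → ℂ :=
  ((ρ:ℂ) * ω)⁻¹ • ∑ s : Fin B, (A s).mulVec (f (clamp (B * x - s)))

lemma Tmap_continuous {f : ℝ → Fin d → ℂ} (hf : Continuous f) :
    Continuous (Tmap A ρ ω f) := by
  unfold Tmap
  apply Continuous.fun_const_smul
  apply continuous_finset_sum
  intro s _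
  exact Continuous.matrix_mulVec continuous_const
    (hf.comp (continuous_clamp.comp (by continuity)))

lemma Tmap_piece (hB : 2 ≤ B) {f : ℝ → Fin d → ℂ} (hf0 : f 0 = 0) (hf1 : f 1 = V)
    (r : Fin B) (x : ℝ) (hx1 : (r : ℝ) / B ≤ x) (hx2 : x ≤ ((r : ℝ) + 1) / B) :
    Tmap A ρ ω f x = ((ρ : ℂ) * ω)⁻¹ •
      ((∑ s ∈ Finset.univ.filter fun s : Fin B => s < r, (A s).mulVec V) +
        (A r).mulVec (f (B * x - r))) := by
  have hB0 : (0:ℝ) < (B:ℝ) := by positivity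
  have hxr : (r:ℝ) ≤ B * x := by
    rw [div_le_iff₀ hB0] at hx1; linarith [hx1]
  have hxr' : B * x ≤ (r:ℝ) + 1 := by
    rw [le_div_iff₀ hB0] at hx2; linarith [hx2]
  unfold Tmap
  congr 1
  rw [← Finset.sum_filter_add_sum_filter_not Finset.univ (fun s : Fin B => s < r)]
  congr 1
  · apply Finset.sum_congr rfl
    intro s hs
    have hsr : s < r := (Finset.mem_filter.mp hs).2
    have hsr' : (s:ℝ) + 1 ≤ (r:ℝ) := by exact_mod_cast Nat.succ_le_of_lt hsr
    rw [clamp_of_one_le (by linarith), hf1]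
  · rw [Finset.sum_eq_single_of_mem r]
    · rw [clamp_of_mem (by linarith) (by linarith)]
    · simp
    · intro s hs hsr
      have h1 : ¬ s < r := by simpa using (Finset.mem_filter.mp hs).2
      have h2 : r < s := lt_of_le_of_ne (not_lt.mp h1) (Ne.symm hsr)
      have h3 : (r:ℝ) + 1 ≤ (s:ℝ) := by exact_mod_cast Nat.succ_le_of_lt h2
      rw [clamp_of_nonpos (by linarith), hf0, Matrix.mulVec_zero]

lemma Tmap_zero {f : ℝ → Fin d → ℂ} (hf0 : f 0 = 0) : Tmap A ρ ω f 0 = 0 := by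
  unfold Tmap
  have : ∀ s : Fin B, clamp (B * 0 - s) = 0 := by
    intro s
    apply clamp_of_nonpos
    simp only [mul_zero, zero_sub, neg_nonpos]
    positivity
  rw [Finset.sum_congr rfl fun s _ => by rw [this s, hf0, Matrix.mulVec_zero]]
  simp

lemma Tmap_one (hρ : 0 < ρ) (hω : ‖ω‖ = 1)
    (hV : (∑ r, A r).mulVec V = ((ρ : ℂ) * ω) • V)
    {f : ℝ → Fin d → ℂ} (hf1 : f 1 = V) : Tmap A ρ ω f 1 = V := by
  have hρω : ((ρ:ℂ) * ω) ≠ 0 := by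
    apply mul_ne_zero
    · exact_mod_cast hρ.ne'
    · intro h; rw [h] at hω; simp at hω
  unfold Tmap
  have : ∀ s : Fin B, clamp (B * 1 - s) = 1 := by
    intro s
    apply clamp_of_one_le
    have : (s:ℝ) ≤ (B:ℝ) - 1 := by
      have := s.isLt
      have : (s:ℝ) + 1 ≤ (B:ℝ) := by exact_mod_cast Nat.succ_le_of_lt s.isLt
      linarith
    linarith
  rw [Finset.sum_congr rfl fun s _ => by rw [this s, hf1]]
  rw [← sum_mulVec, hV, smul_smul, inv_mul_cancel₀ hρω, one_smul]


lemma norm_inv_rho_omega (hρ : 0 < ρ) (hω : ‖ω‖ = 1) : ‖((ρ:ℂ) * ω)⁻¹‖ = ρ⁻¹ := by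
  rw [norm_inv, norm_mul, hω, mul_one, Complex.norm_real, Real.norm_eq_abs,
    abs_of_pos hρ]

variable (lam : ℝ)

/-- the key contraction estimate, valid globally in `x`. -/
lemma Tmap_contract (hρ : 0 < ρ) (hω : ‖ω‖ = 1) (hlam : 0 ≤ lam)
    (hA : ∀ r, ‖A r‖ ≤ lam)
    {f g : ℝ → Fin d → ℂ} (h0 : f 0 = g 0) (h1 : f 1 = g 1) {M : ℝ}
    (hfg : ∀ t ∈ Set.Icc (0:ℝ) 1, ‖f t - g t‖ ≤ M) (x : ℝ) :
    ‖Tmap A ρ ω f x - Tmap A ρ ω g x‖ ≤ lam / ρ * M := by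
  have hM : 0 ≤ M := le_trans (norm_nonneg _) (hfg 0 (by norm_num))
  have key : Tmap A ρ ω f x - Tmap A ρ ω g x = ((ρ:ℂ) * ω)⁻¹ •
      ∑ s : Fin B, (A s).mulVec (f (clamp (B * x - s)) - g (clamp (B * x - s))) := by
    unfold Tmap
    rw [← smul_sub, ← Finset.sum_sub_distrib]
    congr 1
    refine Finset.sum_congr rfl fun s _ => ?_
    rw [Matrix.mulVec_sub]
  rw [key, norm_smul, norm_inv_rho_omega ρ ω hρ hω]
  rw [div_mul_eq_mul_div, div_eq_inv_mul]
  apply mul_le_mul_of_nonneg_left _ (by positivity)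
  -- bound the norm of the sum by lam * M
  have hterm : ∀ s : Fin B,
      ‖(A s).mulVec (f (clamp (B * x - s)) - g (clamp (B * x - s)))‖ ≤ lam * M := by
    intro s
    calc ‖(A s).mulVec (f (clamp (B * x - s)) - g (clamp (B * x - s)))‖
        ≤ ‖A s‖ * ‖f (clamp (B * x - s)) - g (clamp (B * x - s))‖ :=
          Matrix.linfty_opNorm_mulVec _ _
      _ ≤ lam * M := mul_le_mul (hA s) (hfg _ (clamp_mem _)) (norm_nonneg _) hlam
  by_cases hex : ∃ s₀ : Fin B, 0 < B * x - (s₀:ℝ) ∧ B * x - (s₀:ℝ) < 1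
  · obtain ⟨s₀, hs₀1, hs₀2⟩ := hex
    rw [Finset.sum_eq_single_of_mem s₀ (Finset.mem_univ _)]
    · exact hterm s₀
    · intro s _ hss
      rcases lt_or_gt_of_ne (fun h : (s:ℕ) = (s₀:ℕ) => hss (Fin.ext h)) with h | h
      · have : (s:ℝ) + 1 ≤ (s₀:ℝ) := by exact_mod_cast Nat.succ_le_of_lt h
        rw [clamp_of_one_le (by linarith)]
        rw [show f 1 - g 1 = 0 from by rw [h1, sub_self], Matrix.mulVec_zero]
      · have : (s₀:ℝ) + 1 ≤ (s:ℝ) := by exact_mod_cast Nat.succ_le_of_lt h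
        rw [clamp_of_nonpos (by linarith)]
        rw [show f 0 - g 0 = 0 from by rw [h0, sub_self], Matrix.mulVec_zero]
  · push_neg at hex
    have : ∀ s : Fin B, (A s).mulVec (f (clamp (B * x - s)) - g (clamp (B * x - s))) = 0 := by
      intro s
      rcases le_or_gt (B * x - (s:ℝ)) 0 with h | h
      · rw [clamp_of_nonpos h, show f 0 - g 0 = 0 from by rw [h0, sub_self],
          Matrix.mulVec_zero]
      · have h2 : 1 ≤ B * x - (s:ℝ) := hex s h
        rw [clamp_of_one_le h2, show f 1 - g 1 = 0 from by rw [h1, sub_self],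
          Matrix.mulVec_zero]
    rw [Finset.sum_congr rfl fun s _ => this s]
    simp
    positivity

/-- crude global bound for the operator. -/
lemma Tmap_norm_le (hρ : 0 < ρ) (hω : ‖ω‖ = 1) (hlam : 0 ≤ lam)
    (hA : ∀ r, ‖A r‖ ≤ lam) {f : ℝ → Fin d → ℂ} {C : ℝ}
    (hf : ∀ t ∈ Set.Icc (0:ℝ) 1, ‖f t‖ ≤ C) (x : ℝ) :
    ‖Tmap A ρ ω f x‖ ≤ ρ⁻¹ * (B * (lam * C)) := by
  have hC : 0 ≤ C := le_trans (norm_nonneg _) (hf 0 (by norm_num))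
  unfold Tmap
  rw [norm_smul, norm_inv_rho_omega ρ ω hρ hω]
  apply mul_le_mul_of_nonneg_left _ (by positivity)
  calc ‖∑ s : Fin B, (A s).mulVec (f (clamp (B * x - s)))‖
      ≤ ∑ s : Fin B, ‖(A s).mulVec (f (clamp (B * x - s)))‖ := norm_sum_le _ _
    _ ≤ ∑ _s : Fin B, lam * C := by
        refine Finset.sum_le_sum fun s _ => ?_
        calc ‖(A s).mulVec (f (clamp (B * x - s)))‖
            ≤ ‖A s‖ * ‖f (clamp (B * x - s))‖ := Matrix.linfty_opNorm_mulVec _ _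
          _ ≤ lam * C := mul_le_mul (hA s) (hf _ (clamp_mem _)) (norm_nonneg _) hlam
    _ = B * (lam * C) := by rw [Finset.sum_const, Finset.card_univ, Fintype.card_fin,
        nsmul_eq_mul]

end Tmap


lemma exists_digit {B : ℕ} (hB : 2 ≤ B) {t : ℝ} (h0 : 0 ≤ t) (h1 : t < 1) :
    ∃ r : Fin B, (r : ℝ) / B ≤ t ∧ t < ((r : ℝ) + 1) / B := by
  have hB0 : (0:ℝ) < (B:ℝ) := by positivity
  have hfl0 : (0:ℤ) ≤ ⌊(B:ℝ) * t⌋ := Int.floor_nonneg.mpr (by positivity)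
  have hflB : ⌊(B:ℝ) * t⌋ < (B:ℤ) := by
    rw [Int.floor_lt]
    push_cast
    nlinarith
  have hc : ((⌊(B:ℝ) * t⌋.toNat : ℕ) : ℝ) = ((⌊(B:ℝ) * t⌋ : ℤ) : ℝ) := by
    rw [← Int.cast_natCast, Int.toNat_of_nonneg hfl0]
  refine ⟨⟨⌊(B:ℝ) * t⌋.toNat, by omega⟩, ?_, ?_⟩
  · simp only [Fin.val_mk]
    rw [div_le_iff₀ hB0, hc]
    calc ((⌊(B:ℝ) * t⌋ : ℤ) : ℝ) ≤ (B:ℝ) * t := Int.floor_le _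
      _ = t * B := mul_comm _ _
  · simp only [Fin.val_mk]
    rw [lt_div_iff₀ hB0, hc]
    calc t * B = (B:ℝ) * t := mul_comm _ _
      _ < ((⌊(B:ℝ) * t⌋ : ℤ) : ℝ) + 1 := Int.lt_floor_add_one _
end DilationAux

set_option maxHeartbeats 1000000

open DilationAux

/-- under (rsr), the unique continuous solution of the basic dilation
equation is Hölder with exponent `log_B(ρ/λ)`. -/
theorem dilation_solution_holder (B d : ℕ) (hB : 2 ≤ B) (hd : 1 ≤ d)
    (A : Fin B → Matrix (Fin d) (Fin d) ℂ)
    (ρ : ℝ) (hρ : 0 < ρ) (ω : ℂ) (hω : ‖ω‖ = 1)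
    (V : Fin d → ℂ) (hV : (∑ r, A r).mulVec V = ((ρ : ℂ) * ω) • V)
    -- hypothesis (rsr)
    (lam : ℝ) (hlam : 0 < lam) (hlamρ : lam < ρ) (hA : ∀ r, ‖A r‖ ≤ lam) :
    ∃ F : ℝ → Fin d → ℂ,
      ContinuousOn F (Set.Icc 0 1) ∧ DilationEq A ρ ω V F ∧
      (∀ Ψ : ℝ → Fin d → ℂ, ContinuousOn Ψ (Set.Icc 0 1) → DilationEq A ρ ω V Ψ →
        Set.EqOn Ψ F (Set.Icc 0 1)) ∧
      ∃ c : ℝ, 0 ≤ c ∧ ∀ x ∈ Set.Icc (0:ℝ) 1, ∀ y ∈ Set.Icc (0:ℝ) 1,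
        ‖F y - F x‖ ≤ c * |y - x| ^ Real.logb B (ρ / lam) := by
  classical
  have hB0 : (0:ℝ) < (B:ℝ) := by positivity
  have hB1 : (1:ℝ) < (B:ℝ) := by exact_mod_cast lt_of_lt_of_le one_lt_two hB
  set q : ℝ := lam / ρ with hqdef
  have hq0 : 0 < q := div_pos hlam hρ
  have hq1 : q < 1 := (div_lt_one hρ).mpr hlamρ
  have hto0 : ∀ C : ℝ, Tendsto (fun n : ℕ => C * q ^ n) atTop (nhds 0) := by
    intro C
    simpa using (tendsto_pow_atTop_nhds_zero_of_lt_one hq0.le hq1).const_mul C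
  have hsqueeze : ∀ C a : ℝ, (∀ n : ℕ, a ≤ C * q ^ n) → a ≤ 0 := fun C a h =>
    le_of_tendsto_of_tendsto' tendsto_const_nhds (hto0 C) h
  -- the iteration sequence
  set T : (ℝ → Fin d → ℂ) → (ℝ → Fin d → ℂ) := Tmap A ρ ω with hTdef
  set seq : ℕ → ℝ → Fin d → ℂ :=
    fun n => T^[n] (fun x => (clamp x : ℝ) • V) with hseqdef
  have hseq_succ : ∀ n, seq (n + 1) = T (seq n) := by
    intro n
    simp only [hseqdef, Function.iterate_succ_apply']
  have hseq0 : ∀ n, seq n 0 = 0 := by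
    intro n
    induction n with
    | zero => simp [hseqdef, clamp_of_mem le_rfl zero_le_one]
    | succ n ih => rw [hseq_succ n]; exact Tmap_zero A ρ ω ih
  have hseq1 : ∀ n, seq n 1 = V := by
    intro n
    induction n with
    | zero => simp [hseqdef, clamp_of_mem zero_le_one le_rfl]
    | succ n ih => rw [hseq_succ n]; exact Tmap_one A ρ ω V hρ hω hV ih
  have hseqc : ∀ n, Continuous (seq n) := by
    intro n
    induction n with
    | zero =>
      exact (continuous_clamp.smul continuous_const : Continuous fun x => clamp x • V)
    | succ n ih => rw [hseq_succ n]; exact Tmap_continuous A ρ ω ih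
  set M₀ : ℝ := ρ⁻¹ * (B * (lam * ‖V‖)) + ‖V‖ with hM₀def
  have hM₀ : 0 ≤ M₀ := by positivity
  have hseq0norm : ∀ t : ℝ, ‖seq 0 t‖ ≤ ‖V‖ := by
    intro t
    show ‖clamp t • V‖ ≤ ‖V‖
    rw [norm_smul, Real.norm_eq_abs, abs_of_nonneg (clamp_mem t).1]
    nlinarith [(clamp_mem t).2, norm_nonneg V, (clamp_mem t).1]
  have hdiff : ∀ n, ∀ x : ℝ, ‖seq (n + 1) x - seq n x‖ ≤ M₀ * q ^ n := by
    intro n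
    induction n with
    | zero =>
      intro x
      rw [pow_zero, mul_one]
      have h1 : ‖seq 1 x‖ ≤ ρ⁻¹ * (B * (lam * ‖V‖)) := by
        rw [hseq_succ 0]
        exact Tmap_norm_le A ρ ω lam hρ hω hlam.le hA (fun t _ => hseq0norm t) x
      calc ‖seq 1 x - seq 0 x‖ ≤ ‖seq 1 x‖ + ‖seq 0 x‖ := norm_sub_le _ _
        _ ≤ ρ⁻¹ * (B * (lam * ‖V‖)) + ‖V‖ := add_le_add h1 (hseq0norm x)
    | succ n ih =>
      intro x
      rw [hseq_succ (n + 1)]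
      have h1 := Tmap_contract A ρ ω lam hρ hω hlam.le hA
        (f := seq (n + 1)) (g := seq n)
        (by rw [hseq0, hseq0]) (by rw [hseq1, hseq1]) (fun t _ => ih t) x
      rw [← hqdef] at h1
      rw [hseq_succ n] at h1 ⊢
      calc ‖T (T (seq n)) x - T (seq n) x‖ ≤ q * (M₀ * q ^ n) := h1
        _ = M₀ * q ^ (n + 1) := by ring
  have hcauchy : ∀ x : ℝ, CauchySeq (fun n => seq n x) := by
    intro x
    apply cauchySeq_of_le_geometric q M₀ hq1
    intro n
    rw [dist_eq_norm, norm_sub_rev]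
    exact hdiff n x
  have hFex : ∀ x : ℝ, ∃ L, Tendsto (fun n => seq n x) atTop (nhds L) := fun x =>
    cauchySeq_tendsto_of_complete (hcauchy x)
  set F : ℝ → Fin d → ℂ := fun x => (hFex x).choose with hFdef
  have hFlim : ∀ x, Tendsto (fun n => seq n x) atTop (nhds (F x)) := fun x =>
    (hFex x).choose_spec
  have hFdist : ∀ n, ∀ x : ℝ, ‖F x - seq n x‖ ≤ M₀ * q ^ n / (1 - q) := by
    intro n x
    rw [← dist_eq_norm, dist_comm]
    exact dist_le_of_le_geometric_of_tendsto q M₀ hq1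
      (fun m => by rw [dist_eq_norm, norm_sub_rev]; exact hdiff m x) (hFlim x) n
  have hFcont : Continuous F := by
    have huc : TendstoUniformly seq F atTop := by
      rw [Metric.tendstoUniformly_iff]
      intro ε hε
      have h := (hto0 (M₀ / (1 - q))).eventually_lt_const hε
      filter_upwards [h] with n hn x
      rw [dist_eq_norm]
      calc ‖F x - seq n x‖ ≤ M₀ * q ^ n / (1 - q) := hFdist n x
        _ = M₀ / (1 - q) * q ^ n := by ring
        _ < ε := hn
    exact huc.continuous (Filter.Eventually.of_forall hseqc).frequently
  have hF0 : F 0 = 0 := by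
    refine tendsto_nhds_unique (hFlim 0) ?_
    simpa [hseq0] using (tendsto_const_nhds : Tendsto (fun _ : ℕ => (0 : Fin d → ℂ)) atTop _)
  have hF1 : F 1 = V := by
    refine tendsto_nhds_unique (hFlim 1) ?_
    simpa [hseq1] using (tendsto_const_nhds : Tendsto (fun _ : ℕ => V) atTop _)
  have hfix : ∀ x : ℝ, T F x = F x := by
    intro x
    have key : ∀ n : ℕ, ‖T F x - F x‖ ≤ (q * M₀ / (1 - q) + q * M₀ / (1 - q)) * q ^ n := by
      intro n
      have h1 : ‖T F x - T (seq n) x‖ ≤ lam / ρ * (M₀ * q ^ n / (1 - q)) :=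
        Tmap_contract A ρ ω lam hρ hω hlam.le hA (by rw [hF0, hseq0])
          (by rw [hF1, hseq1]) (fun t _ => hFdist n t) x
      rw [← hqdef] at h1
      have h2 : ‖seq (n + 1) x - F x‖ ≤ M₀ * q ^ (n + 1) / (1 - q) := by
        rw [norm_sub_rev]; exact hFdist (n + 1) x
      have h3 : T F x - F x = (T F x - T (seq n) x) + (seq (n + 1) x - F x) := by
        rw [hseq_succ n]; abel
      calc ‖T F x - F x‖ ≤ ‖T F x - T (seq n) x‖ + ‖seq (n + 1) x - F x‖ := by
            rw [h3]; exact norm_add_le _ _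
        _ ≤ q * (M₀ * q ^ n / (1 - q)) + M₀ * q ^ (n + 1) / (1 - q) := add_le_add h1 h2
        _ = (q * M₀ / (1 - q) + q * M₀ / (1 - q)) * q ^ n := by ring
    have h0 : ‖T F x - F x‖ ≤ 0 := hsqueeze _ _ key
    exact sub_eq_zero.mp (norm_le_zero_iff.mp h0)
  have hpiece : ∀ r : Fin B, ∀ x : ℝ, (r : ℝ) / B ≤ x → x ≤ ((r : ℝ) + 1) / B →
      F x = ((ρ : ℂ) * ω)⁻¹ •
        ((∑ s ∈ Finset.univ.filter fun s : Fin B => s < r, (A s).mulVec V) +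
          (A r).mulVec (F (B * x - r))) := by
    intro r x h1 h2
    rw [← hfix x]
    exact Tmap_piece A ρ ω V hB hF0 hF1 r x h1 h2
  have hdil : DilationEq A ρ ω V F :=
    ⟨hF0, hF1, fun r x h1 h2 => hpiece r x h1 h2.le⟩
  -- uniqueness
  have huniq : ∀ Ψ : ℝ → Fin d → ℂ, ContinuousOn Ψ (Set.Icc 0 1) → DilationEq A ρ ω V Ψ →
      Set.EqOn Ψ F (Set.Icc 0 1) := by
    intro Ψ hΨc hΨeq
    obtain ⟨hΨ0, hΨ1, hΨE⟩ := hΨeq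
    obtain ⟨M₁, hM₁⟩ := isCompact_Icc.exists_bound_of_continuousOn
      (hΨc.sub hFcont.continuousOn)
    have key : ∀ n : ℕ, ∀ t ∈ Set.Icc (0:ℝ) 1, ‖Ψ t - F t‖ ≤ M₁ * q ^ n := by
      intro n
      induction n with
      | zero => intro t ht; simpa using hM₁ t ht
      | succ n ih =>
        intro t ht
        rcases eq_or_lt_of_le ht.2 with h1 | h1
        · have hM₁0 : 0 ≤ M₁ :=
            le_trans (norm_nonneg _) (hM₁ 0 ⟨le_refl 0, zero_le_one⟩)
          rw [h1, hΨ1, hF1, sub_self, norm_zero]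
          positivity
        · obtain ⟨r, hr1, hr2⟩ := exists_digit hB ht.1 h1
          have hu1 : (0:ℝ) ≤ (B:ℝ) * t - r := by
            rw [div_le_iff₀ hB0] at hr1; linarith [hr1]
          have hu2 : (B:ℝ) * t - r ≤ 1 := by
            rw [lt_div_iff₀ hB0] at hr2; linarith [hr2]
          have e1 := hΨE r t hr1 hr2
          have e2 := hpiece r t hr1 hr2.le
          have hsub : Ψ t - F t = ((ρ:ℂ) * ω)⁻¹ •
              (A r).mulVec (Ψ ((B:ℝ) * t - r) - F ((B:ℝ) * t - r)) := by
            rw [e1, e2, ← smul_sub, add_sub_add_left_eq_sub, Matrix.mulVec_sub]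
          rw [hsub, norm_smul, norm_inv_rho_omega ρ ω hρ hω]
          calc ρ⁻¹ * ‖(A r).mulVec (Ψ ((B:ℝ) * t - r) - F ((B:ℝ) * t - r))‖
              ≤ ρ⁻¹ * (lam * (M₁ * q ^ n)) := by
                apply mul_le_mul_of_nonneg_left _ (by positivity)
                calc ‖(A r).mulVec (Ψ ((B:ℝ) * t - r) - F ((B:ℝ) * t - r))‖
                    ≤ ‖A r‖ * ‖Ψ ((B:ℝ) * t - r) - F ((B:ℝ) * t - r)‖ :=
                      Matrix.linfty_opNorm_mulVec _ _
                  _ ≤ lam * (M₁ * q ^ n) :=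
                      mul_le_mul (hA r) (ih _ ⟨hu1, hu2⟩) (norm_nonneg _) hlam.le
            _ = M₁ * q ^ (n + 1) := by
                rw [hqdef, pow_succ]; field_simp
    intro t ht
    have h0 : ‖Ψ t - F t‖ ≤ 0 := hsqueeze M₁ _ (fun n => key n t ht)
    exact sub_eq_zero.mp (norm_le_zero_iff.mp h0)
  -- Hölder
  have hholder : ∃ c : ℝ, 0 ≤ c ∧ ∀ x ∈ Set.Icc (0:ℝ) 1, ∀ y ∈ Set.Icc (0:ℝ) 1,
      ‖F y - F x‖ ≤ c * |y - x| ^ Real.logb B (ρ / lam) := by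
    obtain ⟨M₁', hM₁'⟩ := isCompact_Icc.exists_bound_of_continuousOn hFcont.continuousOn
    set M₂ : ℝ := M₁' + M₁' with hM₂def
    have hM₂ : ∀ x ∈ Set.Icc (0:ℝ) 1, ∀ y ∈ Set.Icc (0:ℝ) 1, ‖F y - F x‖ ≤ M₂ :=
      fun x hx y hy => le_trans (norm_sub_le _ _) (add_le_add (hM₁' y hy) (hM₁' x hx))
    have hM₂0 : 0 ≤ M₂ := le_trans (norm_nonneg (F 0 - F 0))
      (hM₂ 0 ⟨le_refl 0, zero_le_one⟩ 0 ⟨le_refl 0, zero_le_one⟩)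
    set α : ℝ := Real.logb B (ρ / lam) with hαdef
    have hα : 0 < α := Real.logb_pos hB1 ((one_lt_div hlam).mpr hlamρ)
    -- oscillation on B-adic intervals of level n
    have osc : ∀ n : ℕ, ∀ j : ℕ, ∀ x y : ℝ, x ∈ Set.Icc (0:ℝ) 1 → y ∈ Set.Icc (0:ℝ) 1 →
        (j:ℝ)/(B:ℝ)^n ≤ x → x ≤ ((j:ℝ)+1)/(B:ℝ)^n →
        (j:ℝ)/(B:ℝ)^n ≤ y → y ≤ ((j:ℝ)+1)/(B:ℝ)^n →
        ‖F y - F x‖ ≤ M₂ * q ^ n := by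
      intro n
      induction n with
      | zero => intro j x y hx hy _ _ _ _; simpa using hM₂ x hx y hy
      | succ n ih =>
        intro j x y hx hy hjx1 hjx2 hjy1 hjy2
        have hBn : (0:ℝ) < (B:ℝ)^n := by positivity
        have hBn1 : (0:ℝ) < (B:ℝ)^(n+1) := by positivity
        by_cases hjB : B ^ (n+1) ≤ j
        · have hj1 : (1:ℝ) ≤ (j:ℝ)/(B:ℝ)^(n+1) := by
            rw [le_div_iff₀ hBn1, one_mul]
            exact_mod_cast hjB
          have hx1 : x = 1 := le_antisymm hx.2 (le_trans hj1 hjx1)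
          have hy1 : y = 1 := le_antisymm hy.2 (le_trans hj1 hjy1)
          rw [hx1, hy1, sub_self, norm_zero]
          positivity
        · push_neg at hjB
          have hBnpos : 0 < B ^ n := pow_pos (by omega) n
          have hrB : j / B ^ n < B := by
            rw [Nat.div_lt_iff_lt_mul hBnpos]
            calc j < B ^ (n+1) := hjB
              _ = B * B ^ n := by rw [pow_succ]; ring
          set r' : ℕ := j / B ^ n with hr'def
          set j' : ℕ := j % B ^ n with hj'def
          have hdm : B ^ n * r' + j' = j := Nat.div_add_mod j (B ^ n)
          have hj'B : j' < B ^ n := Nat.mod_lt _ hBnpos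
          set r : Fin B := ⟨r', hrB⟩ with hrdef
          have hrcast : ((r : ℕ) : ℝ) = (r' : ℝ) := rfl
          have hcast : (j:ℝ) = (B:ℝ)^n * (r':ℝ) + (j':ℝ) := by
            exact_mod_cast congrArg (fun k : ℕ => (k : ℝ)) hdm.symm
          have hj'le : (j':ℝ) + 1 ≤ (B:ℝ)^n := by exact_mod_cast hj'B
          have hBsucc : (B:ℝ)^(n+1) = (B:ℝ)^n * (B:ℝ) := by rw [pow_succ]
          -- clear denominators in hypotheses
          have hx1' : (j:ℝ) ≤ x * (B:ℝ)^(n+1) := by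
            rw [div_le_iff₀ hBn1] at hjx1; exact hjx1
          have hx2' : x * (B:ℝ)^(n+1) ≤ (j:ℝ) + 1 := by
            rw [le_div_iff₀ hBn1] at hjx2; exact hjx2
          have hy1' : (j:ℝ) ≤ y * (B:ℝ)^(n+1) := by
            rw [div_le_iff₀ hBn1] at hjy1; exact hjy1
          have hy2' : y * (B:ℝ)^(n+1) ≤ (j:ℝ) + 1 := by
            rw [le_div_iff₀ hBn1] at hjy2; exact hjy2
          have hj'0 : (0:ℝ) ≤ (j':ℝ) := Nat.cast_nonneg _
          rw [hBsucc] at hx1' hx2' hy1' hy2'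
          -- the level-1 interval containing both points
          have hrx1 : ((r:ℕ):ℝ) / (B:ℝ) ≤ x := by
            rw [hrcast, div_le_iff₀ hB0]
            apply le_of_mul_le_mul_right _ hBn
            linarith
          have hrx2 : x ≤ (((r:ℕ):ℝ) + 1) / (B:ℝ) := by
            rw [hrcast, le_div_iff₀ hB0]
            apply le_of_mul_le_mul_right _ hBn
            linarith
          have hry1 : ((r:ℕ):ℝ) / (B:ℝ) ≤ y := by
            rw [hrcast, div_le_iff₀ hB0]
            apply le_of_mul_le_mul_right _ hBn
            linarith
          have hry2 : y ≤ (((r:ℕ):ℝ) + 1) / (B:ℝ) := by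
            rw [hrcast, le_div_iff₀ hB0]
            apply le_of_mul_le_mul_right _ hBn
            linarith
          set u : ℝ := (B:ℝ) * x - ((r:ℕ):ℝ) with hudef
          set v : ℝ := (B:ℝ) * y - ((r:ℕ):ℝ) with hvdef
          have hu1 : (j':ℝ)/(B:ℝ)^n ≤ u := by
            rw [hudef, hrcast, div_le_iff₀ hBn]
            nlinarith [hx1', hcast]
          have hu2 : u ≤ ((j':ℝ)+1)/(B:ℝ)^n := by
            rw [hudef, hrcast, le_div_iff₀ hBn]
            nlinarith [hx2', hcast]
          have hv1 : (j':ℝ)/(B:ℝ)^n ≤ v := by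
            rw [hvdef, hrcast, div_le_iff₀ hBn]
            nlinarith [hy1', hcast]
          have hv2 : v ≤ ((j':ℝ)+1)/(B:ℝ)^n := by
            rw [hvdef, hrcast, le_div_iff₀ hBn]
            nlinarith [hy2', hcast]
          have hu_mem : u ∈ Set.Icc (0:ℝ) 1 := by
            constructor
            · exact le_trans (by positivity) hu1
            · refine le_trans hu2 ?_
              rw [div_le_one hBn]; linarith
          have hv_mem : v ∈ Set.Icc (0:ℝ) 1 := by
            constructor
            · exact le_trans (by positivity) hv1
            · refine le_trans hv2 ?_
              rw [div_le_one hBn]; linarith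
          have ex := hpiece r x hrx1 hrx2
          have ey := hpiece r y hry1 hry2
          have hsub : F y - F x = ((ρ:ℂ) * ω)⁻¹ • (A r).mulVec (F v - F u) := by
            rw [ex, ey, ← smul_sub, add_sub_add_left_eq_sub, Matrix.mulVec_sub]
          rw [hsub, norm_smul, norm_inv_rho_omega ρ ω hρ hω]
          calc ρ⁻¹ * ‖(A r).mulVec (F v - F u)‖
              ≤ ρ⁻¹ * (lam * (M₂ * q ^ n)) := by
                apply mul_le_mul_of_nonneg_left _ (by positivity)
                calc ‖(A r).mulVec (F v - F u)‖
                    ≤ ‖A r‖ * ‖F v - F u‖ := Matrix.linfty_opNorm_mulVec _ _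
                  _ ≤ lam * (M₂ * q ^ n) :=
                      mul_le_mul (hA r)
                        (ih j' u v hu_mem hv_mem hu1 hu2 hv1 hv2)
                        (norm_nonneg _) hlam.le
            _ = M₂ * q ^ (n + 1) := by rw [hqdef, pow_succ]; field_simp
    -- from q^n to the Hölder bound
    have hqpow : ∀ n : ℕ, ∀ t : ℝ, ((B:ℝ)^(n+1))⁻¹ < t → q ^ n ≤ ρ/lam * t ^ α := by
      intro n t ht
      have htpos : 0 < t := lt_trans (by positivity) ht
      have hBα : (B:ℝ) ^ α = ρ/lam :=
        Real.rpow_logb hB0 (ne_of_gt hB1) (by positivity)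
      have hq_eq : q = (B:ℝ) ^ (-α) := by
        rw [Real.rpow_neg hB0.le, hBα, hqdef, inv_div]
      have hb1 : ((B:ℝ)^(n+1)) = (B:ℝ) ^ (((n:ℝ)+1) : ℝ) := by
        rw [← Real.rpow_natCast (B:ℝ) (n+1), Nat.cast_add, Nat.cast_one]
      have h2 : ((B:ℝ)^(n+1))⁻¹ ^ α = (B:ℝ) ^ (-(((n:ℝ)+1) * α)) := by
        rw [hb1, ← Real.rpow_neg hB0.le, ← Real.rpow_mul hB0.le]
        congr 1
        ring
      have h3 : q ^ n = (B:ℝ) ^ (-((n:ℝ) * α)) := by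
        rw [hq_eq, ← Real.rpow_natCast ((B:ℝ) ^ (-α)) n, ← Real.rpow_mul hB0.le]
        congr 1
        ring
      have h1 : ((B:ℝ)^(n+1))⁻¹ ^ α ≤ t ^ α :=
        Real.rpow_le_rpow (by positivity) ht.le hα.le
      calc q ^ n = (B:ℝ) ^ (-((n:ℝ) * α)) := h3
        _ = (B:ℝ) ^ α * (B:ℝ) ^ (-(((n:ℝ)+1) * α)) := by
            rw [← Real.rpow_add hB0]
            congr 1
            ring
        _ ≤ (B:ℝ) ^ α * t ^ α := by
            apply mul_le_mul_of_nonneg_left _ (by positivity)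
            rw [← h2]
            exact h1
        _ = ρ/lam * t ^ α := by rw [hBα]
    -- main two-point estimate for x < y
    have main : ∀ x ∈ Set.Icc (0:ℝ) 1, ∀ y ∈ Set.Icc (0:ℝ) 1, x < y →
        ‖F y - F x‖ ≤ (M₂ + M₂) * (ρ/lam) * (y - x) ^ α := by
      intro x hx y hy hxy
      set t : ℝ := y - x with htdef
      have ht0 : 0 < t := sub_pos.mpr hxy
      have ht1 : t ≤ 1 := by
        have := hx.1; have := hy.2; simp only [htdef]; linarith
      have h1t : (1:ℝ) ≤ t⁻¹ := by rw [one_le_inv_iff₀]; exact ⟨ht0, ht1⟩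
      have hlogb0 : 0 ≤ Real.logb B t⁻¹ := Real.logb_nonneg hB1 h1t
      set n : ℕ := ⌊Real.logb B t⁻¹⌋₊ with hndef
      have hn1 : (B:ℝ)^n ≤ t⁻¹ := by
        calc (B:ℝ)^n = (B:ℝ) ^ ((n:ℝ)) := (Real.rpow_natCast _ n).symm
          _ ≤ (B:ℝ) ^ (Real.logb B t⁻¹) :=
              Real.rpow_le_rpow_of_exponent_le hB1.le (Nat.floor_le hlogb0)
          _ = t⁻¹ := Real.rpow_logb hB0 (ne_of_gt hB1) (by positivity)
      have hn2 : t⁻¹ < (B:ℝ)^(n+1) := by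
        calc t⁻¹ = (B:ℝ) ^ (Real.logb B t⁻¹) :=
              (Real.rpow_logb hB0 (ne_of_gt hB1) (by positivity)).symm
          _ < (B:ℝ) ^ (((n:ℝ)+1) : ℝ) := by
              apply Real.rpow_lt_rpow_of_exponent_lt hB1
              exact_mod_cast Nat.lt_floor_add_one (Real.logb B t⁻¹)
          _ = (B:ℝ)^(n+1) := by
              rw [← Real.rpow_natCast (B:ℝ) (n+1), Nat.cast_add, Nat.cast_one]
      have ht_le : t ≤ ((B:ℝ)^n)⁻¹ := by
        have h := inv_anti₀ (by positivity : (0:ℝ) < (B:ℝ)^n) hn1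
        rwa [inv_inv] at h
      have ht_gt : ((B:ℝ)^(n+1))⁻¹ < t := by
        have h := inv_strictAnti₀ (inv_pos.mpr ht0) hn2
        rwa [inv_inv] at h
      have hBn : (0:ℝ) < (B:ℝ)^n := by positivity
      set j : ℕ := ⌊(B:ℝ)^n * x⌋.toNat with hjdef
      have hjcast : ((j:ℕ):ℝ) = ((⌊(B:ℝ)^n * x⌋ : ℤ) : ℝ) := by
        rw [← Int.cast_natCast, Int.toNat_of_nonneg
          (Int.floor_nonneg.mpr (mul_nonneg hBn.le hx.1))]
      have hxj1 : (j:ℝ)/(B:ℝ)^n ≤ x := by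
        rw [div_le_iff₀ hBn, hjcast, mul_comm]
        exact Int.floor_le _
      have hxj2 : x ≤ ((j:ℝ)+1)/(B:ℝ)^n := by
        rw [le_div_iff₀ hBn, hjcast, mul_comm]
        exact (Int.lt_floor_add_one _).le
      have hfinal : M₂ * q ^ n ≤ M₂ * (ρ/lam * t ^ α) :=
        mul_le_mul_of_nonneg_left (hqpow n t ht_gt) hM₂0
      by_cases hcase : y ≤ ((j:ℝ)+1)/(B:ℝ)^n
      · have h := osc n j x y hx hy hxj1 hxj2 (le_trans hxj1 hxy.le) hcase
        have hnn : 0 ≤ M₂ * (ρ/lam) * t ^ α := by positivity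
        calc ‖F y - F x‖ ≤ M₂ * q ^ n := h
          _ ≤ M₂ * (ρ/lam * t ^ α) := hfinal
          _ ≤ (M₂ + M₂) * (ρ/lam) * t ^ α := by nlinarith [hnn]
      · push_neg at hcase
        set m : ℝ := ((j:ℝ)+1)/(B:ℝ)^n with hmdef
        have hm_mem : m ∈ Set.Icc (0:ℝ) 1 :=
          ⟨by positivity, le_trans hcase.le hy.2⟩
        have hjm : (j:ℝ)/(B:ℝ)^n ≤ m := by
          rw [hmdef]
          gcongr
          linarith
        have est1 := osc n j x m hx hm_mem hxj1 hxj2 hjm (le_refl m)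
        have hy4 : y ≤ (((j:ℝ)+1)+1)/(B:ℝ)^n := by
          have heq : ((j:ℝ)+1)/(B:ℝ)^n + ((B:ℝ)^n)⁻¹ = (((j:ℝ)+1)+1)/(B:ℝ)^n := by
            field_simp
          have hyx : y = x + t := by rw [htdef]; ring
          have : y ≤ ((j:ℝ)+1)/(B:ℝ)^n + ((B:ℝ)^n)⁻¹ := by
            rw [hyx]; exact add_le_add hxj2 ht_le
          linarith
        have est2 := osc n (j+1) m y hm_mem hy
          (by push_cast; rw [hmdef]) (by push_cast; rw [hmdef]; gcongr; linarith)
          (by push_cast; rw [← hmdef]; exact hcase.le)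
          (by push_cast; exact hy4)
        calc ‖F y - F x‖ = ‖(F y - F m) + (F m - F x)‖ := by
              congr 1
              abel
          _ ≤ ‖F y - F m‖ + ‖F m - F x‖ := norm_add_le _ _
          _ ≤ M₂ * q ^ n + M₂ * q ^ n := add_le_add est2 est1
          _ = (M₂ + M₂) * q ^ n := by ring
          _ ≤ (M₂ + M₂) * (ρ/lam * t ^ α) :=
              mul_le_mul_of_nonneg_left (hqpow n t ht_gt) (by positivity)
          _ = (M₂ + M₂) * (ρ/lam) * t ^ α := by ring
    refine ⟨(M₂ + M₂) * (ρ/lam), by positivity, ?_⟩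
    intro x hx y hy
    rcases lt_trichotomy x y with h | h | h
    · rw [abs_of_pos (sub_pos.mpr h)]
      exact main x hx y hy h
    · rw [h, sub_self, sub_self, norm_zero, abs_zero, Real.zero_rpow (ne_of_gt hα)]
      simp
    · rw [norm_sub_rev, abs_sub_comm, abs_of_pos (sub_pos.mpr h)]
      exact main y hy x hx h
  exact ⟨F, hFcont.continuousOn, hdil, huniq, hholder⟩
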